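/- Fix n ≥ 2 and a real number q > 0. For 1 ≤ i < n let S_i be the matrix of the standard braid generator s_{i,i+1} in the simplicial representation (as defined in the context). Then each S_i is invertible, and every matrix M in the subgroup of the group of invertible real matrices indexed by 𝓔ₙ generated by S₁, …, S_{n−1} maps the set of simplicial vectors into itself: if v ∈ ℝ^{𝓔ₙ} is simplicial, then M·v is simplicial. (This is the statement that the simplicial representation of the n-string braid group preserves the set of C(n,2)-tuples of positive reals representing the squared edge lengths of a nondegenerate euclidean simplex with n labeled vertices.) -/
import Mathlib

/-- The index set `𝓔ₙ` of edges: pairs `(k,l)` with `k < l` in `Fin n`. -/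
abbrev EdgeIdx (n : ℕ) : Type := {p : Fin n × Fin n // p.1 < p.2}

/-- The standard basis vector `e_{ab}` of `ℝ^{𝓔ₙ}`, viewed symmetrically in `a, b`
(with the convention `e_{mm} = 0`). -/
def eVec {n : ℕ} (a b : Fin n) : EdgeIdx n → ℝ :=
  fun c => if (c.1.1 = a ∧ c.1.2 = b) ∨ (c.1.1 = b ∧ c.1.2 = a) then 1 else 0

/-- The matrix `S_i` of the standard braid generator `s_{i,i+1}` (here `j = i+1`) in the
simplicial representation (the LKB representation at `t = 1`), given row-wise. -/
def simpGenMatrix (n : ℕ) (i j : Fin n) (q : ℝ) : Matrix (EdgeIdx n) (EdgeIdx n) ℝ :=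
  fun r c =>
    if r.1.1 = i ∧ r.1.2 = j then q ^ 2 * eVec i j c
    else if r.1.1 = i then eVec j r.1.2 c
    else if r.1.2 = i then eVec r.1.1 j c
    else if r.1.2 = j then
      (q ^ 2 - q) * eVec i j c + q * eVec r.1.1 i c + (1 - q) * eVec r.1.1 j c
    else if r.1.1 = j then
      (q ^ 2 - q) * eVec i j c + q * eVec i r.1.2 c + (1 - q) * eVec j r.1.2 c
    else eVec r.1.1 r.1.2 c

/-- A vector `v ∈ ℝ^{𝓔ₙ}` is *simplicial* if it is the vector of squared edge lengths of
a nondegenerate euclidean simplex with `n` labeled vertices, i.e. there is an affinely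
independent family `p : Fin n → ℝ^{n−1}` with `v(k,l) = ‖p_k − p_l‖²`. -/
def IsSimplicial (n : ℕ) (v : EdgeIdx n → ℝ) : Prop :=
  ∃ p : Fin n → EuclideanSpace ℝ (Fin (n - 1)), AffineIndependent ℝ p ∧
    ∀ c : EdgeIdx n, v c = ‖p c.1.1 - p c.1.2‖ ^ 2

/-! ### Auxiliary material -/

section Aux

variable {n : ℕ}

lemma brs_key {E : Type*} [NormedAddCommGroup E] [InnerProductSpace ℝ E] (q : ℝ) (x y : E) :
    ‖q • x + (1-q) • y‖ ^ 2 = (q^2-q)*‖x-y‖^2 + q*‖x‖^2 + (1-q)*‖y‖^2 := by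
  rw [@norm_add_sq_real, @norm_sub_sq_real, norm_smul, norm_smul, real_inner_smul_left,
    real_inner_smul_right, mul_pow, mul_pow, Real.norm_eq_abs, Real.norm_eq_abs, sq_abs, sq_abs]
  ring

lemma eVec_eq {a b : Fin n} (hab : a < b) (c : EdgeIdx n) :
    eVec a b c = if c = ⟨(a, b), hab⟩ then 1 else 0 := by
  unfold eVec
  congr 1
  simp only [eq_iff_iff]
  constructor
  · rintro (⟨h1, h2⟩ | ⟨h1, h2⟩)
    · exact Subtype.ext (Prod.ext h1 h2)
    · exact absurd (h1 ▸ h2 ▸ c.2) (not_lt.2 hab.le)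
  · rintro rfl; exact Or.inl ⟨rfl, rfl⟩

lemma sum_eVec_mul {a b : Fin n} (hab : a < b) (v : EdgeIdx n → ℝ) :
    ∑ c, eVec a b c * v c = v ⟨(a, b), hab⟩ := by
  rw [Finset.sum_congr rfl (fun c _ => by rw [eVec_eq hab])]
  simp [ite_mul]

variable {i j : Fin n} {q : ℝ}

lemma brs_iltj (hij : (i : ℕ) + 1 = (j : ℕ)) : i < j := by
  rw [Fin.lt_def]; omega

/-- lengths vector of a point family -/
def lenVec {E : Type*} [NormedAddCommGroup E] (p : Fin n → E) : EdgeIdx n → ℝ :=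
  fun c => ‖p c.1.1 - p c.1.2‖ ^ 2

/-- the braid move on point families -/
def moveP {E : Type*} [AddCommGroup E] [Module ℝ E] (i j : Fin n) (q : ℝ) (p : Fin n → E) :
    Fin n → E :=
  fun k => if k = i then p j else if k = j then q • p i + (1-q) • p j else p k

/-- the inverse braid move on point families -/
noncomputable def invMoveP {E : Type*} [AddCommGroup E] [Module ℝ E] (i j : Fin n) (q : ℝ)
    (p : Fin n → E) : Fin n → E :=
  fun k => if k = i then (1-q⁻¹) • p i + q⁻¹ • p j else if k = j then p i else p k

section rows

variable (hij : (i : ℕ) + 1 = (j : ℕ)) (v : EdgeIdx n → ℝ)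

lemma row_ij :
    (simpGenMatrix n i j q).mulVec v ⟨(i, j), brs_iltj hij⟩ = q^2 * v ⟨(i, j), brs_iltj hij⟩ := by
  have hrow : ∀ c, simpGenMatrix n i j q ⟨(i, j), brs_iltj hij⟩ c = q ^ 2 * eVec i j c := by
    intro c
    show (if _ then _ else _) = _
    rw [if_pos ⟨rfl, rfl⟩]
  simp only [Matrix.mulVec, dotProduct, hrow, mul_assoc, ← Finset.mul_sum,
    sum_eVec_mul (brs_iltj hij)]

lemma row_il {l : Fin n} (hl : j < l) :
    (simpGenMatrix n i j q).mulVec v ⟨(i, l), (brs_iltj hij).trans hl⟩ = v ⟨(j, l), hl⟩ := by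
  have hlj : l ≠ j := ne_of_gt hl
  have hrow : ∀ c, simpGenMatrix n i j q ⟨(i, l), (brs_iltj hij).trans hl⟩ c = eVec j l c := by
    intro c
    show (if _ then _ else _) = _
    rw [if_neg (fun h => hlj h.2), if_pos rfl]
  simp only [Matrix.mulVec, dotProduct, hrow, sum_eVec_mul hl]

lemma row_ki {k : Fin n} (hk : k < i) :
    (simpGenMatrix n i j q).mulVec v ⟨(k, i), hk⟩ = v ⟨(k, j), hk.trans (brs_iltj hij)⟩ := by
  have hkne : k ≠ i := ne_of_lt hk
  have hrow : ∀ c, simpGenMatrix n i j q ⟨(k, i), hk⟩ c = eVec k j c := by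
    intro c
    show (if _ then _ else _) = _
    rw [if_neg (fun h => hkne h.1), if_neg hkne, if_pos rfl]
  simp only [Matrix.mulVec, dotProduct, hrow, sum_eVec_mul (hk.trans (brs_iltj hij))]

lemma row_kj {k : Fin n} (hk : k < i) :
    (simpGenMatrix n i j q).mulVec v ⟨(k, j), hk.trans (brs_iltj hij)⟩ =
      (q^2-q) * v ⟨(i, j), brs_iltj hij⟩ + q * v ⟨(k, i), hk⟩ +
        (1-q) * v ⟨(k, j), hk.trans (brs_iltj hij)⟩ := by
  have hkne : k ≠ i := ne_of_lt hk
  have hji : j ≠ i := ne_of_gt (brs_iltj hij)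
  have hrow : ∀ c, simpGenMatrix n i j q ⟨(k, j), hk.trans (brs_iltj hij)⟩ c =
      (q ^ 2 - q) * eVec i j c + q * eVec k i c + (1 - q) * eVec k j c := by
    intro c
    show (if _ then _ else _) = _
    rw [if_neg (fun h => hkne h.1), if_neg hkne, if_neg hji, if_pos rfl]
  simp only [Matrix.mulVec, dotProduct, hrow, add_mul, Finset.sum_add_distrib,
    mul_assoc, ← Finset.mul_sum, sum_eVec_mul (brs_iltj hij), sum_eVec_mul hk,
    sum_eVec_mul (hk.trans (brs_iltj hij))]

lemma row_jl {l : Fin n} (hl : j < l) :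
    (simpGenMatrix n i j q).mulVec v ⟨(j, l), hl⟩ =
      (q^2-q) * v ⟨(i, j), brs_iltj hij⟩ + q * v ⟨(i, l), (brs_iltj hij).trans hl⟩ +
        (1-q) * v ⟨(j, l), hl⟩ := by
  have hji : j ≠ i := ne_of_gt (brs_iltj hij)
  have hlj : l ≠ j := ne_of_gt hl
  have hli : l ≠ i := ne_of_gt ((brs_iltj hij).trans hl)
  have hrow : ∀ c, simpGenMatrix n i j q ⟨(j, l), hl⟩ c =
      (q ^ 2 - q) * eVec i j c + q * eVec i l c + (1 - q) * eVec j l c := by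
    intro c
    show (if _ then _ else _) = _
    rw [if_neg (fun h => hji h.1), if_neg hji, if_neg hli, if_neg hlj, if_pos rfl]
  simp only [Matrix.mulVec, dotProduct, hrow, add_mul, Finset.sum_add_distrib,
    mul_assoc, ← Finset.mul_sum, sum_eVec_mul (brs_iltj hij), sum_eVec_mul hl,
    sum_eVec_mul ((brs_iltj hij).trans hl)]

lemma row_other {k l : Fin n} (hkl : k < l) (hki : k ≠ i) (hkj : k ≠ j)
    (hli : l ≠ i) (hlj : l ≠ j) :
    (simpGenMatrix n i j q).mulVec v ⟨(k, l), hkl⟩ = v ⟨(k, l), hkl⟩ := by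
  have hrow : ∀ c, simpGenMatrix n i j q ⟨(k, l), hkl⟩ c = eVec k l c := by
    intro c
    show (if _ then _ else _) = _
    rw [if_neg (fun h => hki h.1), if_neg hki, if_neg hli, if_neg hlj, if_neg hkj]
  simp only [Matrix.mulVec, dotProduct, hrow, sum_eVec_mul hkl]

end rows

/-- exhaustive case analysis for an edge -/
lemma edge_cases {k l : Fin n} (hkl : k < l) (hij : (i : ℕ) + 1 = (j : ℕ)) :
    (k = i ∧ l = j) ∨ (k = i ∧ j < l) ∨ (l = i ∧ k < i) ∨ (l = j ∧ k < i) ∨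
    (k = j ∧ j < l) ∨ (k ≠ i ∧ k ≠ j ∧ l ≠ i ∧ l ≠ j) := by
  have hkl' := Fin.lt_def.1 hkl
  rcases eq_or_ne k i with rfl | hki
  · rcases eq_or_ne l j with rfl | hlj
    · exact Or.inl ⟨rfl, rfl⟩
    · refine Or.inr (Or.inl ⟨rfl, ?_⟩)
      rw [Fin.lt_def]
      have := Fin.val_ne_of_ne hlj
      omega
  · rcases eq_or_ne l i with rfl | hli
    · exact Or.inr (Or.inr (Or.inl ⟨rfl, hkl⟩))
    · rcases eq_or_ne l j with rfl | hlj
      · refine Or.inr (Or.inr (Or.inr (Or.inl ⟨rfl, ?_⟩)))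
        rw [Fin.lt_def]
        have h1 := Fin.val_ne_of_ne hki
        have h2 := Fin.val_ne_of_ne hli
        omega
      · rcases eq_or_ne k j with rfl | hkj
        · exact Or.inr (Or.inr (Or.inr (Or.inr (Or.inl ⟨rfl, hkl⟩))))
        · exact Or.inr (Or.inr (Or.inr (Or.inr (Or.inr ⟨hki, hkj, hli, hlj⟩))))

/-- The matrix of the braid generator transforms edge lengths by the geometric braid move. -/
lemma mulVec_lenVec {E : Type*} [NormedAddCommGroup E] [InnerProductSpace ℝ E]
    (hij : (i : ℕ) + 1 = (j : ℕ)) (q : ℝ) (p : Fin n → E) :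
    (simpGenMatrix n i j q).mulVec (lenVec p) = lenVec (moveP i j q p) := by
  have hji : j ≠ i := ne_of_gt (brs_iltj hij)
  funext r
  obtain ⟨⟨k, l⟩, hkl⟩ := r
  rcases edge_cases hkl hij with ⟨rfl, rfl⟩ | ⟨rfl, hl⟩ | ⟨rfl, hk⟩ | ⟨rfl, hk⟩ | ⟨rfl, hl⟩ |
    ⟨hki, hkj, hli, hlj⟩
  · rw [show (⟨(k, l), hkl⟩ : EdgeIdx n) = ⟨(k, l), brs_iltj hij⟩ from rfl, row_ij hij]
    show q ^ 2 * ‖p k - p l‖ ^ 2 = ‖moveP k l q p k - moveP k l q p l‖ ^ 2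
    unfold moveP
    rw [if_pos rfl, if_neg hji, if_pos rfl]
    rw [show p l - (q • p k + (1-q) • p l) = (-q) • (p k - p l) by module,
      norm_smul, mul_pow, Real.norm_eq_abs, sq_abs]
    ring
  · rw [show (⟨(k, l), hkl⟩ : EdgeIdx n) = ⟨(k, l), (brs_iltj hij).trans hl⟩ from rfl,
      row_il hij _ hl]
    show ‖p j - p l‖ ^ 2 = ‖moveP k j q p k - moveP k j q p l‖ ^ 2
    unfold moveP
    rw [if_pos rfl, if_neg (ne_of_gt ((brs_iltj hij).trans hl)), if_neg (ne_of_gt hl)]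
  · rw [row_ki hij _ hk]
    show ‖p k - p j‖ ^ 2 = ‖moveP l j q p k - moveP l j q p l‖ ^ 2
    unfold moveP
    rw [if_neg (ne_of_lt hk), if_neg (ne_of_lt (hk.trans (brs_iltj hij))), if_pos rfl]
  · rw [show (⟨(k, l), hkl⟩ : EdgeIdx n) = ⟨(k, l), hk.trans (brs_iltj hij)⟩ from rfl,
      row_kj hij _ hk]
    show (q^2-q) * ‖p i - p l‖ ^ 2 + q * ‖p k - p i‖ ^ 2 + (1-q) * ‖p k - p l‖ ^ 2 =
      ‖moveP i l q p k - moveP i l q p l‖ ^ 2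
    unfold moveP
    rw [if_neg (ne_of_lt hk), if_neg (ne_of_lt (hk.trans (brs_iltj hij))), if_neg hji, if_pos rfl]
    rw [show p k - (q • p i + (1-q) • p l) = q • (p k - p i) + (1-q) • (p k - p l) by module,
      brs_key, show p k - p i - (p k - p l) = -(p i - p l) by module, norm_neg]
  · rw [row_jl hij _ hl]
    show (q^2-q) * ‖p i - p k‖ ^ 2 + q * ‖p i - p l‖ ^ 2 + (1-q) * ‖p k - p l‖ ^ 2 =
      ‖moveP i k q p k - moveP i k q p l‖ ^ 2
    unfold moveP
    rw [if_neg hji, if_pos rfl, if_neg (ne_of_gt ((brs_iltj hij).trans hl)),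
      if_neg (ne_of_gt hl)]
    rw [show q • p i + (1-q) • p k - p l = q • (p i - p l) + (1-q) • (p k - p l) by module,
      brs_key, show p i - p l - (p k - p l) = p i - p k by module]
  · rw [row_other _ hkl hki hkj hli hlj]
    show ‖p k - p l‖ ^ 2 = ‖moveP i j q p k - moveP i j q p l‖ ^ 2
    unfold moveP
    rw [if_neg hki, if_neg hkj, if_neg hli, if_neg hlj]

/-- A matrix of a braid generator has trivial kernel. -/
lemma ker_triv (hij : (i : ℕ) + 1 = (j : ℕ)) (hq : q ≠ 0) (v : EdgeIdx n → ℝ)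
    (h : (simpGenMatrix n i j q).mulVec v = 0) : v = 0 := by
  have hvij : v ⟨(i, j), brs_iltj hij⟩ = 0 := by
    have h0 := congrFun h ⟨(i, j), brs_iltj hij⟩
    rw [row_ij hij] at h0
    exact (mul_eq_zero.1 h0).resolve_left (pow_ne_zero 2 hq)
  funext r
  obtain ⟨⟨k, l⟩, hkl⟩ := r
  show v _ = 0
  rcases edge_cases hkl hij with ⟨rfl, rfl⟩ | ⟨rfl, hl⟩ | ⟨rfl, hk⟩ | ⟨rfl, hk⟩ | ⟨rfl, hl⟩ |
    ⟨hki, hkj, hli, hlj⟩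
  · exact hvij
  · -- edge (i,l), j < l
    have hvjl : v ⟨(j, l), hl⟩ = 0 := by
      have h0 := congrFun h ⟨(k, l), (brs_iltj hij).trans hl⟩
      rw [row_il hij _ hl] at h0
      exact h0
    have h0 := congrFun h ⟨(j, l), hl⟩
    rw [row_jl hij _ hl, hvij, hvjl, mul_zero, mul_zero, add_zero, zero_add] at h0
    exact (mul_eq_zero.1 h0).resolve_left hq
  · -- edge (k,i), k < i
    have hvkj : v ⟨(k, j), hk.trans (brs_iltj hij)⟩ = 0 := by
      have h0 := congrFun h ⟨(k, l), hk⟩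
      rw [row_ki hij _ hk] at h0
      exact h0
    have h0 := congrFun h ⟨(k, j), hk.trans (brs_iltj hij)⟩
    rw [row_kj hij _ hk, hvij, hvkj, mul_zero, mul_zero, add_zero, zero_add] at h0
    exact (mul_eq_zero.1 h0).resolve_left hq
  · -- edge (k,j), k < i
    have h0 := congrFun h ⟨(k, i), hk⟩
    rw [row_ki hij _ hk] at h0
    exact h0
  · -- edge (j,l), j < l
    have h0 := congrFun h ⟨(i, l), (brs_iltj hij).trans hl⟩
    rw [row_il hij _ hl] at h0
    exact h0
  · have h0 := congrFun h ⟨(k, l), hkl⟩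
    rw [row_other _ hkl hki hkj hli hlj] at h0
    exact h0

lemma gen_isUnit (hij : (i : ℕ) + 1 = (j : ℕ)) (hq : q ≠ 0) :
    IsUnit (simpGenMatrix n i j q) := by
  rw [Matrix.isUnit_iff_isUnit_det, isUnit_iff_ne_zero]
  intro hdet
  obtain ⟨v, hv0, hv⟩ := Matrix.exists_mulVec_eq_zero_iff.2 hdet
  exact hv0 (ker_triv hij hq v hv)

lemma sum_split {β : Type*} [AddCommMonoid β] {m : ℕ} {i j : Fin m} (hij : i ≠ j)
    (u : Fin m → β) :
    ∑ k, u k = u i + u j + ∑ k ∈ (Finset.univ.erase i).erase j, u k := by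
  rw [add_assoc,
    Finset.add_sum_erase _ u (Finset.mem_erase.2 ⟨hij.symm, Finset.mem_univ j⟩),
    Finset.add_sum_erase _ u (Finset.mem_univ i)]

/-- Affine independence is preserved under an invertible affine recombination of two of
the points. -/
lemma ai_update {V : Type*} [AddCommGroup V] [Module ℝ V] {m : ℕ} {p : Fin m → V}
    (hp : AffineIndependent ℝ p) {i j : Fin m} (hij : i ≠ j) (a b c d : ℝ)
    (hab : a + b = 1) (hcd : c + d = 1) (hdet : a * d - b * c ≠ 0) :
    AffineIndependent ℝ (fun k => if k = i then a • p i + b • p j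
      else if k = j then c • p i + d • p j else p k) := by
  set f : Fin m → V := fun k => if k = i then a • p i + b • p j
      else if k = j then c • p i + d • p j else p k with hf
  rw [affineIndependent_iff_of_fintype] at hp ⊢
  intro w hw hz
  rw [Finset.univ.weightedVSub_eq_linear_combination hw] at hz
  set w' : Fin m → ℝ := fun k => if k = i then a * w i + c * w j
      else if k = j then b * w i + d * w j else w k with hw'
  have hw'i : w' i = a * w i + c * w j := by rw [hw']; simp
  have hw'j : w' j = b * w i + d * w j := by rw [hw']; simp [hij.symm]
  have hfi : f i = a • p i + b • p j := by rw [hf]; simp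
  have hfj : f j = c • p i + d • p j := by rw [hf]; simp [hij.symm]
  have hE : ∀ k ∈ (Finset.univ.erase i).erase j, w' k = w k ∧ f k = p k := by
    intro k hk
    rw [Finset.mem_erase, Finset.mem_erase] at hk
    obtain ⟨hkj, hki, -⟩ := hk
    exact ⟨by rw [hw']; simp [hki, hkj], by rw [hf]; simp [hki, hkj]⟩
  have hsum' : ∑ k, w' k = 0 := by
    rw [sum_split hij w', hw'i, hw'j,
      Finset.sum_congr rfl (fun k hk => (hE k hk).1)]
    rw [sum_split hij w] at hw
    linear_combination hw + w i * hab + w j * hcd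
  have hlin' : Finset.univ.weightedVSub p w' = 0 := by
    rw [Finset.univ.weightedVSub_eq_linear_combination hsum']
    have g1 : ∑ k, w' k • p k = (a * w i + c * w j) • p i + (b * w i + d * w j) • p j +
        ∑ k ∈ (Finset.univ.erase i).erase j, w k • p k := by
      rw [sum_split hij (fun k => w' k • p k)]
      rw [hw'i, hw'j, Finset.sum_congr rfl (fun k hk => by rw [(hE k hk).1])]
    have g2 : ∑ k, w k • f k = w i • (a • p i + b • p j) + w j • (c • p i + d • p j) +
        ∑ k ∈ (Finset.univ.erase i).erase j, w k • p k := by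
      rw [sum_split hij (fun k => w k • f k)]
      rw [hfi, hfj, Finset.sum_congr rfl (fun k hk => by rw [(hE k hk).2])]
    rw [g1, ← hz, g2]
    module
  have hz' := hp w' hsum' hlin'
  have ei : a * w i + c * w j = 0 := hw'i ▸ hz' i
  have ej : b * w i + d * w j = 0 := hw'j ▸ hz' j
  have hwi : w i = 0 := by
    have h0 : (a * d - b * c) * w i = 0 := by linear_combination d * ei - c * ej
    exact (mul_eq_zero.1 h0).resolve_left hdet
  have hwj : w j = 0 := by
    have h0 : (a * d - b * c) * w j = 0 := by linear_combination a * ej - b * ei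
    exact (mul_eq_zero.1 h0).resolve_left hdet
  intro k
  rcases eq_or_ne k i with rfl | hki
  · exact hwi
  rcases eq_or_ne k j with rfl | hkj
  · exact hwj
  have h0 := hz' k
  rw [hw'] at h0
  simpa [hki, hkj] using h0

lemma ai_moveP {V : Type*} [AddCommGroup V] [Module ℝ V] {m : ℕ} {p : Fin m → V}
    (hp : AffineIndependent ℝ p) {i j : Fin m} (hij : i ≠ j) {q : ℝ} (hq : q ≠ 0) :
    AffineIndependent ℝ (moveP i j q p) := by
  have h := ai_update hp hij 0 1 q (1-q) (by ring) (by ring)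
    (by simpa using hq)
  have hfg : (fun k => if k = i then (0:ℝ) • p i + (1:ℝ) • p j
      else if k = j then q • p i + (1-q) • p j else p k) = moveP i j q p := by
    funext k
    simp only [moveP, zero_smul, zero_add, one_smul]
  rwa [hfg] at h

lemma ai_invMoveP {V : Type*} [AddCommGroup V] [Module ℝ V] {m : ℕ} {p : Fin m → V}
    (hp : AffineIndependent ℝ p) {i j : Fin m} (hij : i ≠ j) {q : ℝ} (hq : q ≠ 0) :
    AffineIndependent ℝ (invMoveP i j q p) := by
  have h := ai_update hp hij (1-q⁻¹) q⁻¹ 1 0 (by ring) (by ring)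
    (by simpa using inv_ne_zero hq)
  have hfg : (fun k => if k = i then (1-q⁻¹) • p i + q⁻¹ • p j
      else if k = j then (1:ℝ) • p i + (0:ℝ) • p j else p k) = invMoveP i j q p := by
    funext k
    simp only [invMoveP, zero_smul, add_zero, one_smul]
  rwa [hfg] at h

lemma moveP_invMoveP {V : Type*} [AddCommGroup V] [Module ℝ V] {m : ℕ} {i j : Fin m}
    (hij : i ≠ j) {q : ℝ} (hq : q ≠ 0) (p : Fin m → V) :
    moveP i j q (invMoveP i j q p) = p := by
  funext k
  rcases eq_or_ne k i with rfl | hki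
  · simp [moveP, invMoveP, hij.symm]
  rcases eq_or_ne k j with rfl | hkj
  · have h1 : moveP i k q (invMoveP i k q p) k =
        q • ((1-q⁻¹) • p i + q⁻¹ • p k) + (1-q) • p i := by
      simp [moveP, invMoveP, hki, hij.symm]
    rw [h1, smul_add, smul_smul, smul_smul, mul_inv_cancel₀ hq, one_smul, mul_one_sub,
      mul_inv_cancel₀ hq]
    module
  · simp [moveP, invMoveP, hki, hkj]

end Aux

/-- **Braids reshape simplices.** For `q > 0`, each matrix `S_i` of a standard braid
generator in the simplicial representation is invertible, and every element of the
subgroup of invertible matrices generated by `S₁, …, S_{n−1}` (the image of the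
simplicial representation of the `n`-string braid group) maps simplicial vectors to
simplicial vectors. -/
theorem simplicial_rep_preserves_simplices (n : ℕ) (hn : 2 ≤ n) (q : ℝ) (hq : 0 < q) :
    (∀ i j : Fin n, (i : ℕ) + 1 = (j : ℕ) → IsUnit (simpGenMatrix n i j q)) ∧
    (∀ M : (Matrix (EdgeIdx n) (EdgeIdx n) ℝ)ˣ,
      M ∈ Subgroup.closure {M : (Matrix (EdgeIdx n) (EdgeIdx n) ℝ)ˣ |
        ∃ i j : Fin n, (i : ℕ) + 1 = (j : ℕ) ∧ (M : Matrix (EdgeIdx n) (EdgeIdx n) ℝ)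
          = simpGenMatrix n i j q} →
      ∀ v : EdgeIdx n → ℝ, IsSimplicial n v →
        IsSimplicial n ((M : Matrix (EdgeIdx n) (EdgeIdx n) ℝ).mulVec v)) := by
  have hq' : q ≠ 0 := ne_of_gt hq
  refine ⟨fun i j hij => gen_isUnit hij hq', ?_⟩
  set G := (Matrix (EdgeIdx n) (EdgeIdx n) ℝ)ˣ
  set P : G → Prop := fun M =>
    ∀ v : EdgeIdx n → ℝ, IsSimplicial n v →
      IsSimplicial n ((M : Matrix (EdgeIdx n) (EdgeIdx n) ℝ).mulVec v) with hP
  have hmul : ∀ A B : G, P A → P B → P (A * B) := by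
    intro A B hA hB v hv
    have h : ((A * B : G) : Matrix (EdgeIdx n) (EdgeIdx n) ℝ).mulVec v =
        (A : Matrix (EdgeIdx n) (EdgeIdx n) ℝ).mulVec
          ((B : Matrix (EdgeIdx n) (EdgeIdx n) ℝ).mulVec v) := by
      rw [Units.val_mul, ← Matrix.mulVec_mulVec]
    rw [h]
    exact hA _ (hB _ hv)
  have hone : P 1 := by
    intro v hv
    rwa [Units.val_one, Matrix.one_mulVec]
  let H : Subgroup G :=
    { carrier := {M : G | P M ∧ P M⁻¹}
      one_mem' := ⟨hone, by rwa [inv_one]⟩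
      mul_mem' := by
        rintro A B ⟨hA, hA'⟩ ⟨hB, hB'⟩
        exact ⟨hmul A B hA hB, by rw [mul_inv_rev]; exact hmul _ _ hB' hA'⟩
      inv_mem' := by
        rintro A ⟨hA, hA'⟩
        exact ⟨hA', by rwa [inv_inv]⟩ }
  intro M hM v hv
  have hle : Subgroup.closure {M : G |
      ∃ i j : Fin n, (i : ℕ) + 1 = (j : ℕ) ∧ (M : Matrix (EdgeIdx n) (EdgeIdx n) ℝ)
        = simpGenMatrix n i j q} ≤ H := by
    rw [Subgroup.closure_le]
    rintro M ⟨i, j, hij, hMe⟩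
    have hijne : i ≠ j := (brs_iltj hij).ne
    constructor
    · rintro v ⟨p, hp, hv⟩
      have hvl : v = lenVec p := funext hv
      refine ⟨moveP i j q p, ai_moveP hp hijne hq', fun c => ?_⟩
      rw [hMe, hvl, mulVec_lenVec hij q p]
      rfl
    · rintro v ⟨p, hp, hv⟩
      have hvl : v = lenVec p := funext hv
      refine ⟨invMoveP i j q p, ai_invMoveP hp hijne hq', fun c => ?_⟩
      have key : (M : Matrix (EdgeIdx n) (EdgeIdx n) ℝ).mulVec (lenVec (invMoveP i j q p))
          = v := by
        rw [hMe, mulVec_lenVec hij q _, moveP_invMoveP hijne hq' p, hvl]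
      calc ((M⁻¹ : G) : Matrix (EdgeIdx n) (EdgeIdx n) ℝ).mulVec v c
          = ((M⁻¹ : G) : Matrix (EdgeIdx n) (EdgeIdx n) ℝ).mulVec
              ((M : Matrix (EdgeIdx n) (EdgeIdx n) ℝ).mulVec (lenVec (invMoveP i j q p))) c := by
            rw [key]
        _ = lenVec (invMoveP i j q p) c := by
            rw [Matrix.mulVec_mulVec, ← Units.val_mul, inv_mul_cancel, Units.val_one,
              Matrix.one_mulVec]
        _ = _ := rfl
  exact (hle hM).1 v hv
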